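/- Let Φ, Ψ ∈ F(x_1,…,x_n). Then G_Ψ ⊆ G_Φ if and only if Φ belongs to the subfield F(e_1,…,e_n,Ψ) of F(x_1,…,x_n) generated over F by e_1,…,e_n and Ψ. -/

import Mathlib

open MvPolynomial

/-- The action of a permutation `σ ∈ S_n` on the rational function field `F(x_1,…,x_n)`,
given by `Φ(x_1,…,x_n) ↦ Φ(x_{σ(1)},…,x_{σ(n)})`. -/
noncomputable def permAct (F : Type*) [Field F] (n : ℕ) (σ : Equiv.Perm (Fin n)) :
    FractionRing (MvPolynomial (Fin n) F) ≃+* FractionRing (MvPolynomial (Fin n) F) :=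
  IsFractionRing.ringEquivOfRingEquiv (MvPolynomial.renameEquiv F σ).toRingEquiv

/-- The constants from `F` inside `F(x_1,…,x_n)`. -/
noncomputable def constSet (F : Type*) [Field F] (n : ℕ) :
    Set (FractionRing (MvPolynomial (Fin n) F)) :=
  Set.range fun a : F =>
    algebraMap (MvPolynomial (Fin n) F) (FractionRing (MvPolynomial (Fin n) F)) (C a)

/-- The elementary symmetric polynomials `e_1,…,e_n` inside `F(x_1,…,x_n)`. -/
noncomputable def esymmSet (F : Type*) [Field F] (n : ℕ) :
    Set (FractionRing (MvPolynomial (Fin n) F)) :=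
  Set.range fun i : Fin n =>
    algebraMap (MvPolynomial (Fin n) F) (FractionRing (MvPolynomial (Fin n) F))
      (esymm (Fin n) F ((i : ℕ) + 1))

set_option maxHeartbeats 1000000
set_option synthInstance.maxHeartbeats 200000

section Aux

variable (F : Type*) [Field F] (n : ℕ)

local notation "R" => MvPolynomial (Fin n) F
local notation "K" => FractionRing (MvPolynomial (Fin n) F)

lemma permAct_algebraMap (σ : Equiv.Perm (Fin n)) (p : MvPolynomial (Fin n) F) :
    permAct F n σ (algebraMap R K p) = algebraMap R K (rename σ p) :=
  IsFractionRing.ringEquivOfRingEquiv_algebraMap _ p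

/-- `permAct` as a monoid hom. -/
noncomputable def permHom : Equiv.Perm (Fin n) →* RingAut K where
  toFun := permAct F n
  map_one' := by
    apply RingEquiv.toRingHom_injective
    apply IsLocalization.ringHom_ext (nonZeroDivisors R)
    refine RingHom.ext fun p => ?_
    simp [RingHom.comp_apply, RingEquiv.coe_toRingHom, permAct_algebraMap]
  map_mul' σ τ := by
    apply RingEquiv.toRingHom_injective
    apply IsLocalization.ringHom_ext (nonZeroDivisors R)
    refine RingHom.ext fun p => ?_
    have : (σ * τ : Equiv.Perm (Fin n)) = (τ.trans σ) := rfl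
    show permAct F n (σ * τ) ((algebraMap R K) p) =
      permAct F n σ (permAct F n τ ((algebraMap R K) p))
    rw [permAct_algebraMap, permAct_algebraMap, permAct_algebraMap, rename_rename]
    rfl

end Aux

section Aux2

variable (F : Type*) [Field F] (n : ℕ)

local notation "R" => MvPolynomial (Fin n) F
local notation "K" => FractionRing (MvPolynomial (Fin n) F)

noncomputable instance permMSA : MulSemiringAction (Equiv.Perm (Fin n)) K :=
  MulSemiringAction.compHom _ (permHom F n)

lemma perm_smul_def (σ : Equiv.Perm (Fin n)) (x : K) : σ • x = permAct F n σ x := rfl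

instance : FaithfulSMul (Equiv.Perm (Fin n)) K where
  eq_of_smul_eq_smul {σ τ} h := by
    ext i
    have := h (algebraMap R K (X i))
    rw [perm_smul_def, perm_smul_def, permAct_algebraMap, permAct_algebraMap,
      rename_X, rename_X] at this
    have h2 : (X (σ i) : MvPolynomial (Fin n) F) = X (τ i) :=
      IsFractionRing.injective R K this
    exact congrArg Fin.val (X_injective h2)

/-- The image of a symmetric polynomial lies in the subfield generated by constants and
the elementary symmetric polynomials. -/
lemma algebraMap_symmetric_mem (p : MvPolynomial (Fin n) F) (hp : p.IsSymmetric) :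
    algebraMap R K p ∈ Subfield.closure (constSet F n ∪ esymmSet F n) := by
  obtain ⟨q, hq⟩ := esymmAlgHom_surjective (σ := Fin n) F (Fintype.card_fin n).le
    ⟨p, (mem_symmetricSubalgebra p).2 hp⟩
  have hq' : aeval (fun i : Fin n => esymm (Fin n) F ((i : ℕ) + 1)) q = p := by
    have := congrArg Subtype.val hq
    rwa [esymmAlgHom_apply] at this
  rw [← hq']
  clear hq hq' hp
  induction q using MvPolynomial.induction_on with
  | C a =>
      rw [aeval_C]
      exact Subfield.subset_closure (Or.inl ⟨a, rfl⟩)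
  | add f g hf hg =>
      rw [map_add, map_add]
      exact Subfield.add_mem _ hf hg
  | mul_X f i hf =>
      rw [map_mul, map_mul, aeval_X]
      exact Subfield.mul_mem _ hf (Subfield.subset_closure (Or.inr ⟨i, rfl⟩))

/-- Fundamental theorem of symmetric rational functions. -/
lemma fixed_mem_closure (x : K) (hx : ∀ σ : Equiv.Perm (Fin n), permAct F n σ x = x) :
    x ∈ Subfield.closure (constSet F n ∪ esymmSet F n) := by
  obtain ⟨p, q, hq, rfl⟩ := IsFractionRing.div_surjective (A := R) x
  rw [mem_nonZeroDivisors_iff_ne_zero] at hq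
  set Q : MvPolynomial (Fin n) F := ∏ σ : Equiv.Perm (Fin n), rename σ q with hQdef
  have hren : ∀ (σ : Equiv.Perm (Fin n)), rename (⇑σ) q ≠ 0 := fun σ =>
    fun h => hq ((map_eq_zero_iff _ (rename_injective _ σ.injective)).1 h)
  have hQ0 : Q ≠ 0 := Finset.prod_ne_zero_iff.2 fun σ _ => hren σ
  have hQsym : Q.IsSymmetric := by
    intro τ
    rw [hQdef, map_prod]
    rw [← Equiv.prod_comp (Equiv.mulLeft τ) (fun σ => rename (⇑σ) q)]
    refine Finset.prod_congr rfl fun σ _ => ?_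
    rw [rename_rename]
    rfl
  have hQbar : ∀ (τ : Equiv.Perm (Fin n)), permAct F n τ (algebraMap R K Q) = algebraMap R K Q :=
    fun τ => by rw [permAct_algebraMap, hQsym τ]
  set P : MvPolynomial (Fin n) F :=
    p * ∏ σ ∈ Finset.univ.erase (1 : Equiv.Perm (Fin n)), rename σ q with hPdef
  have hQbar0 : algebraMap R K Q ≠ 0 := fun h => hQ0 (IsFractionRing.injective R K (by simpa using h))
  have hqbar0 : algebraMap R K q ≠ 0 := fun h => hq (IsFractionRing.injective R K (by simpa using h))
  have hPbar : algebraMap R K P = (algebraMap R K p / algebraMap R K q) * algebraMap R K Q := by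
    rw [hPdef, hQdef, ← Finset.mul_prod_erase Finset.univ _ (Finset.mem_univ 1)]
    have h1 : rename (⇑(1 : Equiv.Perm (Fin n))) q = q := by
      rw [Equiv.Perm.coe_one, rename_id, AlgHom.id_apply]
    rw [h1, map_mul, map_mul]
    field_simp
  have hPsym : P.IsSymmetric := by
    intro τ
    apply IsFractionRing.injective R K
    have : permAct F n τ (algebraMap R K P) = algebraMap R K P := by
      rw [hPbar, map_mul, hx τ, hQbar τ]
    rw [← permAct_algebraMap, this]
  have hx' : algebraMap R K p / algebraMap R K q = algebraMap R K P / algebraMap R K Q := by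
    rw [hPbar]; field_simp
  rw [hx']
  exact Subfield.div_mem _ (algebraMap_symmetric_mem F n P hPsym)
    (algebraMap_symmetric_mem F n Q hQsym)

end Aux2

/-- **Theorem 4.1 (Lagrange).** For rational functions `Φ, Ψ ∈ F(x_1,…,x_n)`, the stabilizer
inclusion `G_Ψ ⊆ G_Φ` holds if and only if `Φ` lies in the subfield `F(e_1,…,e_n,Ψ)` generated
over `F` by the elementary symmetric polynomials and `Ψ`. -/
theorem stabilizer_subset_iff_mem_adjoin
    (F : Type*) [Field F] [CharZero F] (n : ℕ)
    (Φ Ψ : FractionRing (MvPolynomial (Fin n) F)) :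
    {σ : Equiv.Perm (Fin n) | permAct F n σ Ψ = Ψ} ⊆
        {σ : Equiv.Perm (Fin n) | permAct F n σ Φ = Φ} ↔
      Φ ∈ Subfield.closure (constSet F n ∪ esymmSet F n ∪ {Ψ}) := by
  let K := FractionRing (MvPolynomial (Fin n) F)
  let S := Subfield.closure (constSet F n ∪ esymmSet F n ∪ {Ψ})
  show _ ↔ Φ ∈ S
  constructor
  · intro h
    set G := Equiv.Perm (Fin n)
    let k := FixedPoints.subfield G K
    let M := IntermediateField.adjoin k ({Ψ} : Set K)
    have hΨM : Ψ ∈ M := IntermediateField.subset_adjoin _ _ rfl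
    have hΦM : Φ ∈ M := by
      rw [← IsGalois.fixedField_fixingSubgroup M]
      intro g
      obtain ⟨σ, hσ⟩ := FixedPoints.toAlgAut_surjective G K (g : K ≃ₐ[k] K)
      have hgΨ : (g : K ≃ₐ[k] K) Ψ = Ψ := (mem_fixingSubgroup_iff _).mp g.2 Ψ hΨM
      have hσΨ : permAct F n σ Ψ = Ψ := by
        rw [show permAct F n σ Ψ = σ • Ψ from rfl, show σ • Ψ =
          (MulSemiringAction.toAlgAut G k K σ) Ψ from rfl, hσ, hgΨ]
      have hσΦ : permAct F n σ Φ = Φ := h (show σ ∈ _ from hσΨ)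
      show (g : K ≃ₐ[k] K) • Φ = Φ
      rw [show (g : K ≃ₐ[k] K) • Φ = (g : K ≃ₐ[k] K) Φ from rfl, ← hσ]
      exact hσΦ
    have hk : ∀ y : k, algebraMap k K y ∈ S := by
      intro y
      have hy : ∀ σ : Equiv.Perm (Fin n), permAct F n σ (y : K) = (y : K) := fun σ => y.2 σ
      exact Subfield.closure_mono Set.subset_union_left (fixed_mem_closure F n (y : K) hy)
    let T : IntermediateField k K := Subfield.toIntermediateField S hk
    have hΨT : Ψ ∈ T := Subfield.subset_closure (Set.mem_union_right _ rfl)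
    have hMT : M ≤ T :=
      IntermediateField.adjoin_le_iff.mpr (Set.singleton_subset_iff.mpr hΨT)
    exact hMT hΦM
  · intro hΦ σ hσ
    have hfix : S ≤ RingHom.eqLocusField (permAct F n σ : K →+* K) (RingHom.id K) := by
      apply Subfield.closure_le.mpr
      rintro x ((⟨a, rfl⟩ | ⟨i, rfl⟩) | rfl)
      · show permAct F n σ _ = RingHom.id K _
        rw [permAct_algebraMap, rename_C]
        rfl
      · show permAct F n σ _ = RingHom.id K _
        rw [permAct_algebraMap, esymm_isSymmetric (Fin n) F _ σ]
        rfl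
      · exact hσ
    exact hfix (hΦ : Φ ∈ S)
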